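/- arXiv:1901.00651 — 2 statements merged into one kernel-verified Lean document; each statement's English description precedes it below -/
import Mathlib

section
/- A weakly additive, order-preserving functional $f\colon L \to \mathbb{R}$ on a partially ordered vector space $L$ with interior point $x_0$ of the positive cone is bounded (i.e., $\sup\{|f(x)| : x \in \langle 0;1\rangle\} < \infty$) if and only if it is continuous with respect to the topology generated by the neighbourhoods $\langle z;\delta\rangle$. -/
def InnerSeg {L : Type*} [AddCommGroup L] [Module ℝ L] (a b x : L) : Prop :=
  x ∈ segment ℝ a b ∧ x ≠ a ∧ x ≠ b

def InnerPoint {L : Type*} [AddCommGroup L] [Module ℝ L] (S : Set L) (x : L) : Prop :=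
  x ∈ S ∧ ∀ a b : L, InnerSeg a b x →
    ∃ c d : L, c ∈ segment ℝ a b ∩ S ∧ d ∈ segment ℝ a b ∩ S ∧ InnerSeg c d x

def coneNbhd {L : Type*} [AddCommGroup L] [PartialOrder L] [Module ℝ L]
    (x₀ z : L) (δ : ℝ) : Set L :=
  {y : L | InnerPoint {v : L | 0 ≤ v} (δ • x₀ + (y - z)) ∧
           InnerPoint {v : L | 0 ≤ v} (δ • x₀ - (y - z))}

def coneTop {L : Type*} [AddCommGroup L] [PartialOrder L] [Module ℝ L]
    (x₀ : L) : TopologicalSpace L :=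
  TopologicalSpace.generateFrom {s : Set L | ∃ z : L, ∃ δ : ℝ, 0 < δ ∧ s = coneNbhd x₀ z δ}

def WeaklyAdditive {L : Type*} [AddCommGroup L] [Module ℝ L] (x₀ : L) (f : L → ℝ) : Prop :=
  ∀ x : L, ∀ l : ℝ, f (x + l • x₀) = f x + l * f x₀

lemma smul_mem_seg {L : Type*} [AddCommGroup L] [Module ℝ L] {a b x : L} (δ : ℝ)
    (h : x ∈ segment ℝ a b) : δ • x ∈ segment ℝ (δ • a) (δ • b) := by
  obtain ⟨u, v, hu, hv, huv, hx⟩ := h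
  exact ⟨u, v, hu, hv, huv, by rw [← hx]; module⟩

lemma innerSeg_smul {L : Type*} [AddCommGroup L] [Module ℝ L] {a b x : L} {δ : ℝ}
    (hδ : δ ≠ 0) (h : InnerSeg a b x) : InnerSeg (δ • a) (δ • b) (δ • x) := by
  obtain ⟨hseg, hxa, hxb⟩ := h
  refine ⟨smul_mem_seg δ hseg, ?_, ?_⟩ <;>
    intro hc <;> [exact hxa (smul_right_injective L hδ hc);
                  exact hxb (smul_right_injective L hδ hc)]

lemma innerPoint_smul {L : Type*} [AddCommGroup L] [PartialOrder L] [IsOrderedAddMonoid L] [Module ℝ L]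
    [PosSMulStrictMono ℝ L] [PosSMulReflectLT ℝ L]
    {x : L} {δ : ℝ} (hδ : 0 < δ) (h : InnerPoint {v : L | 0 ≤ v} x) :
    InnerPoint {v : L | 0 ≤ v} (δ • x) := by
  refine ⟨smul_nonneg hδ.le h.1, ?_⟩
  intro a b hab
  have hab' : InnerSeg (δ⁻¹ • a) (δ⁻¹ • b) x := by
    have := innerSeg_smul (x := δ • x) (inv_ne_zero hδ.ne') hab
    rwa [inv_smul_smul₀ hδ.ne'] at this
  obtain ⟨c, d, ⟨hcseg, hcS⟩, ⟨hdseg, hdS⟩, hcd⟩ := h.2 _ _ hab'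
  refine ⟨δ • c, δ • d, ⟨?_, smul_nonneg hδ.le hcS⟩, ⟨?_, smul_nonneg hδ.le hdS⟩,
    innerSeg_smul hδ.ne' hcd⟩
  · have := smul_mem_seg δ hcseg
    rwa [smul_inv_smul₀ hδ.ne', smul_inv_smul₀ hδ.ne'] at this
  · have := smul_mem_seg δ hdseg
    rwa [smul_inv_smul₀ hδ.ne', smul_inv_smul₀ hδ.ne'] at this

lemma key_est {L : Type*} [AddCommGroup L] [PartialOrder L] [IsOrderedAddMonoid L] [Module ℝ L]
    [PosSMulStrictMono ℝ L] [PosSMulReflectLT ℝ L]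
    {x₀ : L} {f : L → ℝ} (hwa : WeaklyAdditive x₀ f) (hmono : Monotone f)
    {x y : L} {δ : ℝ} (hy : y ∈ coneNbhd x₀ x δ) : |f y - f x| ≤ δ * f x₀ := by
  obtain ⟨h1, h2⟩ := hy
  have h1' : (0:L) ≤ δ • x₀ + (y - x) := h1.1
  have h2' : (0:L) ≤ δ • x₀ - (y - x) := h2.1
  have hle1 : x - δ • x₀ ≤ y := by
    rwa [← sub_nonneg, show y - (x - δ • x₀) = δ • x₀ + (y - x) by abel]
  have hle2 : y ≤ x + δ • x₀ := by
    rwa [← sub_nonneg, show x + δ • x₀ - y = δ • x₀ - (y - x) by abel]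
  have hf1 : f x + (-δ) * f x₀ ≤ f y := by
    have := hmono hle1
    rwa [show x - δ • x₀ = x + (-δ) • x₀ by rw [neg_smul]; abel, hwa] at this
  have hf2 : f y ≤ f x + δ * f x₀ := by
    have := hmono hle2
    rwa [hwa] at this
  rw [abs_le]
  constructor <;> linarith

theorem stmt7 {L : Type*} [AddCommGroup L] [PartialOrder L] [IsOrderedAddMonoid L] [Module ℝ L]
    [PosSMulStrictMono ℝ L] [PosSMulReflectLT ℝ L]
    (x₀ : L) (hx₀ : InnerPoint {v : L | 0 ≤ v} x₀)
    (f : L → ℝ) (hwa : WeaklyAdditive x₀ f) (hmono : Monotone f) :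
    (∃ M : ℝ, ∀ x ∈ coneNbhd x₀ 0 1, |f x| ≤ M) ↔
      @Continuous L ℝ (coneTop x₀) _ f := by
  constructor
  · intro _
    rw [@continuous_def L ℝ (coneTop x₀) _]
    intro U hU
    have hrepr : f ⁻¹' U =
        ⋃₀ {s | (∃ z : L, ∃ δ : ℝ, 0 < δ ∧ s = coneNbhd x₀ z δ) ∧ s ⊆ f ⁻¹' U} := by
      apply subset_antisymm
      · intro x hx
        obtain ⟨ε, hε, hball⟩ := Metric.isOpen_iff.1 hU (f x) hx
        set δ := ε / (|f x₀| + 1) with hδdef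
        have hpos : (0:ℝ) < |f x₀| + 1 := by positivity
        have hδ : 0 < δ := div_pos hε hpos
        refine Set.mem_sUnion.2 ⟨coneNbhd x₀ x δ, ⟨⟨x, δ, hδ, rfl⟩, ?_⟩, ?_⟩
        · intro y hy
          apply hball
          rw [Metric.mem_ball, Real.dist_eq]
          have hk := key_est hwa hmono hy
          have h2 : δ * f x₀ ≤ δ * |f x₀| := by
            nlinarith [le_abs_self (f x₀)]
          have h3 : δ * (|f x₀| + 1) = ε := by
            rw [hδdef]; field_simp
          nlinarith
        · show InnerPoint _ _ ∧ InnerPoint _ _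
          rw [sub_self, add_zero, sub_zero]
          exact ⟨innerPoint_smul hδ hx₀, innerPoint_smul hδ hx₀⟩
      · intro x hx
        obtain ⟨s, ⟨_, hsub⟩, hxs⟩ := hx
        exact hsub hxs
    rw [hrepr]
    exact TopologicalSpace.GenerateOpen.sUnion _ fun s hs =>
      TopologicalSpace.GenerateOpen.basic s hs.1
  · intro _
    refine ⟨|f 0| + |f x₀|, fun x hx => ?_⟩
    have hk := key_est hwa hmono hx
    have h1 := abs_sub_abs_le_abs_sub (f x) (f 0)
    have h2 := le_abs_self (f x₀)
    linarith
end

section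
/- (Banach–Steinhaus for order-preserving operators) Let $E, F$ be vector spaces with order units and $\mathcal{H}$ a family of weakly additive, order-preserving operators $T\colon E \to F$. Let $A = \{x \in E : \{T(x) : T \in \mathcal{H}\} \text{ is bounded in } F\}$. If $A$ is of the second category in $E$, then $A = E$ and $\mathcal{H}$ is equicontinuous. -/
/-- The order norm `‖x‖ = inf {c > 0 : -c•e ≤ x ≤ c•e}` of a space with order unit `e`. -/
noncomputable def ordNorm {L : Type*} [AddCommGroup L] [PartialOrder L] [Module ℝ L]
    (e x : L) : ℝ :=
  sInf {c : ℝ | 0 < c ∧ -(c • e) ≤ x ∧ x ≤ c • e}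

/-- `e` is an order unit: every element is bounded by a multiple of `e`. -/
def IsOrderUnit {L : Type*} [AddCommGroup L] [PartialOrder L] [Module ℝ L] (e : L) : Prop :=
  ∀ x : L, ∃ l : ℝ, 0 < l ∧ -(l • e) ≤ x ∧ x ≤ l • e

/-- The space is Archimedean with respect to the order unit `e`. -/
def IsArch {L : Type*} [AddCommGroup L] [PartialOrder L] [Module ℝ L] (e : L) : Prop :=
  ∀ x : L, (∀ n : ℕ, 0 < n → (n : ℝ) • x ≤ e) → x ≤ 0

/-- An operator `T` is weakly additive with respect to the order unit `e`. -/
def WAddOp {L M : Type*} [AddCommGroup L] [Module ℝ L] [AddCommGroup M] [Module ℝ M]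
    (e : L) (T : L → M) : Prop :=
  ∀ x : L, ∀ l : ℝ, T (x + l • e) = T x + l • T e

/-- The ball of radius `δ` around `z` in the order norm. -/
def ordBall {L : Type*} [AddCommGroup L] [PartialOrder L] [Module ℝ L]
    (e z : L) (δ : ℝ) : Set L :=
  {y : L | ordNorm e (y - z) < δ}

/-- The order topology, generated by the order-norm balls. -/
noncomputable def ordTop {L : Type*} [AddCommGroup L] [PartialOrder L] [Module ℝ L]
    (e : L) : TopologicalSpace L :=
  TopologicalSpace.generateFrom {s : Set L | ∃ z : L, ∃ δ : ℝ, 0 < δ ∧ s = ordBall e z δ}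

/-- `A` is of the second category: it is not contained in a countable union
of nowhere dense sets. -/
def SecondCategory {X : Type*} (t : TopologicalSpace X) (A : Set X) : Prop :=
  ¬ ∃ f : ℕ → Set X, (∀ n, @interior X t (@closure X t (f n)) = ∅) ∧ A ⊆ ⋃ n, f n

/-- The space with order unit `e` is complete (Banach) in its order norm:
every Cauchy sequence converges. -/
def OrdComplete {L : Type*} [AddCommGroup L] [PartialOrder L] [Module ℝ L] (e : L) : Prop :=
  ∀ u : ℕ → L,
    (∀ ε : ℝ, 0 < ε → ∃ N : ℕ, ∀ m ≥ N, ∀ n ≥ N, ordNorm e (u m - u n) < ε) →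
    ∃ x : L, ∀ ε : ℝ, 0 < ε → ∃ N : ℕ, ∀ n ≥ N, ordNorm e (u n - x) < ε

section lemmas
set_option linter.unusedSectionVars false
variable {L : Type*} [AddCommGroup L] [PartialOrder L] [IsOrderedAddMonoid L] [Module ℝ L] [PosSMulStrictMono ℝ L] {e : L}

lemma ordSet_bddBelow (x : L) : BddBelow {c : ℝ | 0 < c ∧ -(c • e) ≤ x ∧ x ≤ c • e} :=
  ⟨0, fun c hc => hc.1.le⟩

lemma ordSet_nonempty (hu : IsOrderUnit e) (x : L) :
    Set.Nonempty {c : ℝ | 0 < c ∧ -(c • e) ≤ x ∧ x ≤ c • e} := hu x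

lemma e_nn (hu : IsOrderUnit e) : (0 : L) ≤ e := by
  obtain ⟨l, hl, -, h2⟩ := hu 0
  have h := smul_le_smul_of_nonneg_left h2 (le_of_lt (show (0:ℝ) < 1/l by positivity))
  rwa [smul_zero, smul_smul, one_div_mul_cancel hl.ne', one_smul] at h

lemma ordNorm_nonneg (x : L) : 0 ≤ ordNorm e x :=
  Real.sInf_nonneg fun c hc => hc.1.le

lemma smul_e_mono (hu : IsOrderUnit e) {a b : ℝ} (h : a ≤ b) : a • e ≤ b • e := by
  have h0 : 0 ≤ (b - a) • e := smul_nonneg (by linarith) (e_nn hu)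
  rw [sub_smul, sub_nonneg] at h0; exact h0

lemma ordNorm_neg (x : L) : ordNorm e (-x) = ordNorm e x := by
  unfold ordNorm; congr 1; ext c
  constructor <;> rintro ⟨h1, h2, h3⟩ <;>
    exact ⟨h1, by simpa using neg_le_neg h3, by simpa using neg_le_neg h2⟩

end lemmas

section lemmas2
set_option linter.unusedSectionVars false
variable {L : Type*} [AddCommGroup L] [PartialOrder L] [IsOrderedAddMonoid L] [Module ℝ L] [PosSMulStrictMono ℝ L] {e : L}

lemma le_ordNorm_smul (hu : IsOrderUnit e) (ha : IsArch e) (x : L) :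
    x ≤ ordNorm e x • e := by
  have hne := ordSet_nonempty hu x
  have key : ∀ ε : ℝ, 0 < ε → x ≤ (ordNorm e x + ε) • e := by
    intro ε hε
    obtain ⟨c, hcS, hc⟩ := exists_lt_of_csInf_lt hne
      (lt_add_of_pos_right (ordNorm e x) hε)
    exact hcS.2.2.trans (smul_e_mono hu hc.le)
  have h0 : x - ordNorm e x • e ≤ 0 := by
    apply ha
    intro n hn
    have hn' : (0:ℝ) < n := by exact_mod_cast hn
    have h1 : x - ordNorm e x • e ≤ (1 / n : ℝ) • e := by
      have := key (1/n) (by positivity)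
      rw [add_smul] at this
      exact sub_le_iff_le_add'.mpr this
    calc (n:ℝ) • (x - ordNorm e x • e) ≤ (n:ℝ) • ((1/n : ℝ) • e) :=
          smul_le_smul_of_nonneg_left h1 hn'.le
      _ = e := by rw [smul_smul, mul_one_div_cancel hn'.ne', one_smul]
  exact sub_nonpos.mp h0

lemma neg_ordNorm_smul_le (hu : IsOrderUnit e) (ha : IsArch e) (x : L) :
    -(ordNorm e x • e) ≤ x := by
  have := le_ordNorm_smul hu ha (-x)
  rw [ordNorm_neg] at this
  exact neg_le.mp (by simpa using this)

lemma ordNorm_le (hu : IsOrderUnit e) {x : L} {c : ℝ} (hc : 0 ≤ c)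
    (h1 : -(c • e) ≤ x) (h2 : x ≤ c • e) : ordNorm e x ≤ c := by
  apply le_of_forall_pos_le_add
  intro ε hε
  apply csInf_le (ordSet_bddBelow x)
  refine ⟨by linarith, ?_, h2.trans (smul_e_mono hu (by linarith))⟩
  exact le_trans (neg_le_neg (smul_e_mono hu (show c ≤ c + ε by linarith))) h1

lemma ordNorm_add_le (hu : IsOrderUnit e) (ha : IsArch e) (x y : L) :
    ordNorm e (x + y) ≤ ordNorm e x + ordNorm e y := by
  apply ordNorm_le hu (add_nonneg (ordNorm_nonneg x) (ordNorm_nonneg y))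
  · rw [add_smul, neg_add]
    exact add_le_add (neg_ordNorm_smul_le hu ha x) (neg_ordNorm_smul_le hu ha y)
  · rw [add_smul]
    exact add_le_add (le_ordNorm_smul hu ha x) (le_ordNorm_smul hu ha y)

lemma ordNorm_smul_le (hu : IsOrderUnit e) (ha : IsArch e) {a : ℝ} (haa : 0 ≤ a) (x : L) :
    ordNorm e (a • x) ≤ a * ordNorm e x := by
  apply ordNorm_le hu (mul_nonneg haa (ordNorm_nonneg x))
  · rw [mul_smul]
    have := smul_le_smul_of_nonneg_left (neg_ordNorm_smul_le hu ha x) haa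
    rwa [smul_neg] at this
  · rw [mul_smul]
    exact smul_le_smul_of_nonneg_left (le_ordNorm_smul hu ha x) haa

lemma ordNorm_zero (hu : IsOrderUnit e) : ordNorm e (0 : L) = 0 := by
  refine le_antisymm (ordNorm_le hu le_rfl ?_ ?_) (ordNorm_nonneg _) <;> simp

lemma ordNorm_smul_e_le (hu : IsOrderUnit e) {c : ℝ} (hc : 0 ≤ c) :
    ordNorm e (c • e) ≤ c := by
  refine ordNorm_le hu hc ?_ le_rfl
  exact le_trans (neg_nonpos_of_nonneg (smul_nonneg hc (e_nn hu))) (smul_nonneg hc (e_nn hu))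

end lemmas2



section top
set_option linter.unusedSectionVars false
variable {L : Type*} [AddCommGroup L] [PartialOrder L] [IsOrderedAddMonoid L] [Module ℝ L] [PosSMulStrictMono ℝ L] {e : L}

lemma ball_shift (hu : IsOrderUnit e) (ha : IsArch e) {w z : L} {δ : ℝ}
    (hz : z ∈ ordBall e w δ) :
    ∃ δ' : ℝ, 0 < δ' ∧ ordBall e z δ' ⊆ ordBall e w δ := by
  refine ⟨δ - ordNorm e (z - w), by simpa [ordBall, sub_pos] using hz, fun y hy => ?_⟩
  have h1 : ordNorm e (y - w) ≤ ordNorm e (y - z) + ordNorm e (z - w) := by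
    have := ordNorm_add_le hu ha (y - z) (z - w)
    simpa using this
  have h2 : ordNorm e (y - z) < δ - ordNorm e (z - w) := hy
  simp only [ordBall, Set.mem_setOf_eq] at *
  linarith

lemma open_sub (hu : IsOrderUnit e) (ha : IsArch e) {U : Set L}
    (hU : @IsOpen L (ordTop e) U) :
    ∀ z ∈ U, ∃ δ : ℝ, 0 < δ ∧ ordBall e z δ ⊆ U := by
  have hU' : TopologicalSpace.GenerateOpen
      {s : Set L | ∃ z : L, ∃ δ : ℝ, 0 < δ ∧ s = ordBall e z δ} U := hU
  clear hU
  induction hU' with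
  | basic s hs =>
    obtain ⟨w, δ, hδ, rfl⟩ := hs
    intro z hz
    exact ball_shift hu ha hz
  | univ => exact fun z _ => ⟨1, one_pos, fun y _ => trivial⟩
  | inter s t _ _ ihs iht =>
    intro z hz
    obtain ⟨δ1, h1, hs1⟩ := ihs z hz.1
    obtain ⟨δ2, h2, hs2⟩ := iht z hz.2
    refine ⟨min δ1 δ2, lt_min h1 h2, fun y hy => ?_⟩
    have : ordNorm e (y - z) < min δ1 δ2 := hy
    exact ⟨hs1 (lt_of_lt_of_le this (min_le_left _ _)),
           hs2 (lt_of_lt_of_le this (min_le_right _ _))⟩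
  | sUnion S _ ih =>
    intro z hz
    obtain ⟨s, hsS, hzs⟩ := hz
    obtain ⟨δ, hδ, hsub⟩ := ih s hsS z hzs
    exact ⟨δ, hδ, hsub.trans (Set.subset_sUnion_of_mem hsS)⟩

lemma mem_ball_self (hu : IsOrderUnit e) {z : L} {δ : ℝ} (hδ : 0 < δ) :
    z ∈ ordBall e z δ := by
  simp [ordBall, ordNorm_zero hu, hδ]

lemma isOpen_of_balls (hu : IsOrderUnit e) {U : Set L}
    (h : ∀ z ∈ U, ∃ δ : ℝ, 0 < δ ∧ ordBall e z δ ⊆ U) :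
    @IsOpen L (ordTop e) U := by
  choose δ hδ hsub using h
  have hEq : U = ⋃ (z : L) (hz : z ∈ U), ordBall e z (δ z hz) := by
    ext y
    simp only [Set.mem_iUnion]
    exact ⟨fun hy => ⟨y, hy, mem_ball_self hu (hδ y hy)⟩,
           fun ⟨z, hz, hyz⟩ => hsub z hz hyz⟩
  rw [hEq]
  letI : TopologicalSpace L := ordTop e
  exact isOpen_iUnion fun z => isOpen_iUnion fun hz =>
    TopologicalSpace.GenerateOpen.basic _ ⟨z, δ z hz, hδ z hz, rfl⟩

end top



section lip
set_option linter.unusedSectionVars false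
variable {E F : Type*}
    [AddCommGroup E] [PartialOrder E] [IsOrderedAddMonoid E] [Module ℝ E] [PosSMulStrictMono ℝ E]
    [AddCommGroup F] [PartialOrder F] [IsOrderedAddMonoid F] [Module ℝ F] [PosSMulStrictMono ℝ F]
    {eE : E} {eF : F}

lemma lip (huE : IsOrderUnit eE) (haE : IsArch eE) (huF : IsOrderUnit eF) (haF : IsArch eF)
    {T : E → F} (hw : WAddOp eE T) (hm : Monotone T) (x y : E) :
    ordNorm eF (T x - T y) ≤ ordNorm eE (x - y) * ordNorm eF (T eE) := by
  set c := ordNorm eE (x - y) with hc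
  set k := ordNorm eF (T eE) with hk
  have hc0 : 0 ≤ c := ordNorm_nonneg _
  have hk0 : 0 ≤ k := ordNorm_nonneg _
  have hxy : x ≤ y + c • eE := by
    have := le_ordNorm_smul huE haE (x - y)
    rwa [sub_le_iff_le_add'] at this
  have hyx : y ≤ x + c • eE := by
    have := neg_ordNorm_smul_le huE haE (x - y)
    rw [neg_le_sub_iff_le_add] at this
    exact this
  have hTe_le : T eE ≤ k • eF := le_ordNorm_smul huF haF _
  have hTe_ge : -(k • eF) ≤ T eE := neg_ordNorm_smul_le huF haF _
  have hck : c • T eE ≤ (c * k) • eF := by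
    rw [mul_smul]
    exact smul_le_smul_of_nonneg_left hTe_le hc0
  have hck' : -((c * k) • eF) ≤ c • T eE := by
    rw [mul_smul]
    have := smul_le_smul_of_nonneg_left hTe_ge hc0
    rwa [smul_neg] at this
  have hTx : T x ≤ T y + c • T eE := by
    calc T x ≤ T (y + c • eE) := hm hxy
      _ = T y + c • T eE := hw y c
  have hTy : T y ≤ T x + c • T eE := by
    calc T y ≤ T (x + c • eE) := hm hyx
      _ = T x + c • T eE := hw x c
  apply ordNorm_le huF (mul_nonneg hc0 hk0)
  · have h1 : -(c • T eE) ≤ T x - T y := by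
      rw [neg_le_sub_iff_le_add]
      exact hTy
    exact le_trans (neg_le_neg hck) h1
  · exact le_trans (sub_le_iff_le_add'.mpr hTx) hck

end lip

theorem stmt13 {E F : Type*}
    [AddCommGroup E] [PartialOrder E] [IsOrderedAddMonoid E] [Module ℝ E] [PosSMulStrictMono ℝ E]
    [AddCommGroup F] [PartialOrder F] [IsOrderedAddMonoid F] [Module ℝ F] [PosSMulStrictMono ℝ F]
    (eE : E) (eF : F) (huE : IsOrderUnit eE) (haE : IsArch eE)
    (huF : IsOrderUnit eF) (haF : IsArch eF)
    (H : Set (E → F)) (hH : ∀ T ∈ H, WAddOp eE T ∧ Monotone T)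
    (A : Set E)
    (hA : A = {x : E | ∃ M : ℝ, ∀ T ∈ H, ordNorm eF (T x) ≤ M})
    (hcat : SecondCategory (ordTop eE) A) :
    A = Set.univ ∧
      ∀ ε : ℝ, 0 < ε → ∃ δ : ℝ, 0 < δ ∧
        ∀ T ∈ H, ∀ x : E, ordNorm eE x < δ → ordNorm eF (T x) < ε := by
  classical
  letI : TopologicalSpace E := ordTop eE
  set B : ℕ → Set E := fun n => {x | ∀ T ∈ H, ordNorm eF (T x) ≤ (n : ℝ)} with hB
  have hopen : ∀ n : ℕ, IsOpen (B n)ᶜ := by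
    intro n
    apply isOpen_of_balls huE
    intro z hz
    rw [Set.mem_compl_iff] at hz
    simp only [hB, Set.mem_setOf_eq] at hz
    push_neg at hz
    obtain ⟨T, hTH, hTz⟩ := hz
    obtain ⟨hw, hm⟩ := hH T hTH
    set K := ordNorm eF (T eE) with hK
    have hK0 : 0 ≤ K := ordNorm_nonneg _
    refine ⟨(ordNorm eF (T z) - n) / (K + 1),
      div_pos (by linarith) (by linarith), fun y hy => ?_⟩
    intro hyB
    have hyn : ordNorm eF (T y) ≤ (n : ℝ) := hyB T hTH
    have hy' : ordNorm eE (y - z) < (ordNorm eF (T z) - n) / (K + 1) := hy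
    have hlip := lip huE haE huF haF hw hm z y
    have hzy : ordNorm eE (z - y) = ordNorm eE (y - z) := by
      rw [← ordNorm_neg (z - y), neg_sub]
    have htri : ordNorm eF (T z) ≤ ordNorm eF (T z - T y) + ordNorm eF (T y) := by
      have := ordNorm_add_le huF haF (T z - T y) (T y)
      simpa using this
    have h1 : ordNorm eE (y - z) * K ≤ ((ordNorm eF (T z) - n) / (K + 1)) * K :=
      mul_le_mul_of_nonneg_right hy'.le hK0
    have h2 : ((ordNorm eF (T z) - n) / (K + 1)) * K <
        ((ordNorm eF (T z) - n) / (K + 1)) * (K + 1) := by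
      apply mul_lt_mul_of_pos_left (by linarith) (div_pos (by linarith) (by linarith))
    have h3 : ((ordNorm eF (T z) - n) / (K + 1)) * (K + 1) = ordNorm eF (T z) - n := by
      field_simp
    rw [hzy] at hlip
    linarith
  have hclosed : ∀ n : ℕ, closure (B n) = B n := by
    intro n
    exact (isOpen_compl_iff.mp (hopen n)).closure_eq
  have hex : ∃ n : ℕ, ∃ z : E, z ∈ interior (B n) := by
    by_contra hno
    push_neg at hno
    apply hcat
    refine ⟨B, ?_, ?_⟩
    · intro n
      rw [hclosed n]
      exact Set.eq_empty_iff_forall_notMem.mpr (hno n)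
    · rw [hA]
      intro x hx
      obtain ⟨M, hM⟩ := hx
      refine Set.mem_iUnion.mpr ⟨⌈M⌉₊, fun T hT => (hM T hT).trans (Nat.le_ceil M)⟩
  obtain ⟨n, z, hz⟩ := hex
  obtain ⟨δ, hδ, hball⟩ := open_sub huE haE isOpen_interior z hz
  have hball' : ordBall eE z δ ⊆ B n := hball.trans interior_subset
  have hzB : z ∈ B n := hball' (mem_ball_self huE hδ)
  have hKbd : ∀ T ∈ H, ordNorm eF (T eE) ≤ 4 * n / δ := by
    intro T hT
    obtain ⟨hw, hm⟩ := hH T hT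
    have hwB : z + (δ/2) • eE ∈ B n := by
      apply hball'
      show ordNorm eE (z + (δ/2) • eE - z) < δ
      rw [add_sub_cancel_left]
      exact lt_of_le_of_lt (ordNorm_smul_e_le huE (by linarith)) (by linarith)
    have hTw : T (z + (δ/2) • eE) = T z + (δ/2) • T eE := hw z (δ/2)
    have h2n : ordNorm eF ((δ/2) • T eE) ≤ 2 * n := by
      have heq : (δ/2) • T eE = T (z + (δ/2) • eE) - T z := by rw [hTw]; abel
      rw [heq]
      have htri := ordNorm_add_le huF haF (T (z + (δ/2) • eE)) (-(T z))
      rw [ordNorm_neg] at htri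
      calc ordNorm eF (T (z + (δ/2) • eE) - T z)
          ≤ ordNorm eF (T (z + (δ/2) • eE)) + ordNorm eF (T z) := by
            simpa [sub_eq_add_neg] using htri
        _ ≤ (n : ℝ) + n := add_le_add (hwB T hT) (hzB T hT)
        _ = 2 * n := by ring
    have hrec : T eE = (2/δ) • ((δ/2) • T eE) := by
      rw [smul_smul, show (2/δ) * (δ/2) = 1 by field_simp, one_smul]
    calc ordNorm eF (T eE) = ordNorm eF ((2/δ) • ((δ/2) • T eE)) := by rw [← hrec]
      _ ≤ (2/δ) * ordNorm eF ((δ/2) • T eE) :=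
          ordNorm_smul_le huF haF (by positivity) _
      _ ≤ (2/δ) * (2 * n) := by
          apply mul_le_mul_of_nonneg_left h2n (by positivity)
      _ = 4 * n / δ := by ring
  have hT0 : ∀ T ∈ H, T 0 = 0 := by
    intro T hT
    have h := (hH T hT).1 0 1
    rw [zero_add, one_smul, one_smul] at h
    exact right_eq_add.mp h
  have hbd : ∀ x : E, ∀ T ∈ H, ordNorm eF (T x) ≤ ordNorm eE x * (4 * n / δ) := by
    intro x T hT
    obtain ⟨hw, hm⟩ := hH T hT
    have hl := lip huE haE huF haF hw hm x 0
    rw [hT0 T hT, sub_zero, sub_zero] at hl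
    exact hl.trans (mul_le_mul_of_nonneg_left (hKbd T hT) (ordNorm_nonneg x))
  have hC : (0 : ℝ) < 4 * n / δ + 1 := by
    have : (0:ℝ) ≤ 4 * n / δ := div_nonneg (by positivity) hδ.le
    linarith
  constructor
  · rw [hA]
    ext x
    simp only [Set.mem_setOf_eq, Set.mem_univ, iff_true]
    exact ⟨ordNorm eE x * (4 * n / δ), fun T hT => hbd x T hT⟩
  · intro ε hε
    refine ⟨ε / (4 * n / δ + 1), div_pos hε hC, fun T hT x hx => ?_⟩
    have h1 : ordNorm eF (T x) ≤ ordNorm eE x * (4 * n / δ + 1) := by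
      refine (hbd x T hT).trans ?_
      have := ordNorm_nonneg (e := eE) x
      nlinarith
    calc ordNorm eF (T x) ≤ ordNorm eE x * (4 * n / δ + 1) := h1
      _ < (ε / (4 * n / δ + 1)) * (4 * n / δ + 1) :=
          mul_lt_mul_of_pos_right hx hC
      _ = ε := by field_simp
end
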